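/- For every real μ > −1 and every ω > 0, the Abel limit of ∫₀^∞ x^μ e^{iωx} dx exists and equals Γ(μ+1) ω^{−(μ+1)} e^{i(μ+1)π/2}; that is, lim_{s→0⁺} ∫₀^∞ x^μ e^{(iω−s)x} dx = Γ(μ+1) e^{i(μ+1)π/2} / ω^{μ+1}. -/

import Mathlib

open MeasureTheory Filter Set Polynomial
open scoped Classical

noncomputable section

/-- The Abel limit of `∫₀^∞ g(x) dx` is `L`: for every `s > 0` the integral
`∫₀^∞ e^{-s x} g(x) dx` converges and these integrals tend to `L` as `s → 0⁺`. -/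
def HasAbelLimit (g : ℝ → ℂ) (L : ℂ) : Prop :=
  (∀ s : ℝ, 0 < s →
    IntegrableOn (fun x : ℝ => Complex.exp (-(s : ℂ) * (x : ℂ)) * g x) (Set.Ioi 0)) ∧
  Tendsto (fun s : ℝ => ∫ x in Set.Ioi (0:ℝ), Complex.exp (-(s : ℂ) * (x : ℂ)) * g x)
    (nhdsWithin 0 (Set.Ioi 0)) (nhds L)

/-- Bessel function of the first kind of order `ν`, for `x > 0`, with the convention
`1/Γ(z) = 0` at nonpositive integers `z` (automatic since `Real.Gamma` vanishes there). -/
def besselJ (ν x : ℝ) : ℝ :=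
  ∑' k : ℕ, ((-1 : ℝ) ^ k / ((k.factorial : ℝ) * Real.Gamma (ν + k + 1))) *
    (x / 2) ^ (ν + 2 * (k : ℝ))

/-- Modified Bessel function of the second kind of order `ν`, for `x > 0`. -/
def besselK (ν x : ℝ) : ℝ :=
  ∫ t in Set.Ioi (0:ℝ), Real.exp (-x * Real.cosh t) * Real.cosh (ν * t)

/-- The weight function `w_{μ,ν}` on `(0,∞)`. -/
def weightW (μ ν : ℝ) (x : ℝ) : ℝ :=
  if ∃ m : ℤ, μ - ν = 2 * m then (1/2) * x ^ ((μ - 1)/2) * besselK ν (Real.sqrt x)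
  else (1/2) * x ^ (μ/2) * besselK ν (Real.sqrt x)

/-- `0 < x_1 < ⋯ < x_n` together with positive weights `w_1, …, w_n` form an `n`-point
Gaussian quadrature rule for `w_{μ,ν}`. -/
def IsGaussRule (μ ν : ℝ) (n : ℕ) (xs ws : Fin n → ℝ) : Prop :=
  StrictMono xs ∧ (∀ j, 0 < xs j) ∧ (∀ j, 0 < ws j) ∧
  ∀ p : Polynomial ℝ, p.natDegree ≤ 2 * n - 1 →
    ∑ j, ws j * p.eval (xs j) = ∫ x in Set.Ioi (0:ℝ), weightW μ ν x * p.eval x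

/-- `κ = μ` if `μ - ν` is even and `κ = μ + 1` if `μ - ν` is odd. -/
def kappaQ (μ ν : ℕ) : ℝ := if Even (μ - ν) then (μ : ℝ) else (μ : ℝ) + 1

/-- The boundary weights `ŵ_k⁰` of the generalized Gauss–Radau rule. -/
def wHat0 (μ ν : ℕ) {n : ℕ} (xs ws : Fin n → ℝ) (k : ℕ) : ℝ :=
  (1 / (k.factorial : ℝ)) *
    (2 ^ k * Real.Gamma (((ν : ℝ) + k + 1)/2) / Real.Gamma (((ν : ℝ) - k + 1)/2)
      - (2 / Real.pi) * Real.cos (((k : ℝ) - ν) * Real.pi / 2) *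
          ∑ j, ws j * (xs j) ^ (((k : ℝ) - kappaQ μ ν)/2))

/-- The generalized Gauss–Radau rule `(Q_{2n,μ} f)(ω)`. -/
def QRule (μ ν : ℕ) {n : ℕ} (xs ws : Fin n → ℝ) (f : ℂ → ℂ) (ω : ℝ) : ℂ :=
  (1 / (ω : ℂ)) *
    ((∑ k ∈ Finset.range μ, (wHat0 μ ν xs ws k : ℂ) / (ω : ℂ) ^ k * iteratedDeriv k f 0)
      + ∑ j, ((ws j * (xs j) ^ (-(kappaQ μ ν)/2) / Real.pi : ℝ) : ℂ) *
          (Complex.exp (-(ν : ℂ) * (Real.pi : ℂ) * Complex.I / 2) *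
              f (Complex.I * (Real.sqrt (xs j) : ℂ) / (ω : ℂ))
            + Complex.exp ((ν : ℂ) * (Real.pi : ℂ) * Complex.I / 2) *
              f (-Complex.I * (Real.sqrt (xs j) : ℂ) / (ω : ℂ))))

/-- `P` is a monic polynomial of degree `m` orthogonal with respect to `x^μ J_ν(x)`
on `(0,∞)`, all integrals taken in the Abel-limit sense. -/
def MonicOrthoBessel (μ ν : ℝ) (m : ℕ) (P : Polynomial ℂ) : Prop :=
  P.Monic ∧ P.natDegree = m ∧
  ∀ k < m, HasAbelLimit
    (fun x : ℝ => P.eval (x : ℂ) * ((x ^ ((k : ℝ) + μ) : ℝ) : ℂ) * (besselJ ν x : ℂ)) 0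

/-- `φ` is the monic real polynomial of degree `m` orthogonal to all lower powers
with respect to the weight `w_{μ,ν}` on `(0,∞)`. -/
def IsMonicOrthoW (μ ν : ℝ) (m : ℕ) (φ : Polynomial ℝ) : Prop :=
  φ.Monic ∧ φ.natDegree = m ∧
  ∀ k < m, ∫ x in Set.Ioi (0:ℝ), weightW μ ν x * φ.eval x * x ^ k = 0


namespace AbelAux0

lemma real_int (μ : ℝ) (hμ : -1 < μ) {s : ℝ} (hs : 0 < s) :
    IntegrableOn (fun x : ℝ => x ^ μ * Real.exp (-(s * x))) (Ioi 0) := by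
  have h0 : IntegrableOn (fun x : ℝ => Real.exp (-x) * x ^ ((μ + 1) - 1)) (Ioi 0) :=
    Real.GammaIntegral_convergent (by linarith)
  have h1 : IntegrableOn (fun x : ℝ => Real.exp (-(s * x)) * (s * x) ^ ((μ + 1) - 1))
      (Ioi 0) := by
    have := (integrableOn_Ioi_comp_mul_left_iff
      (fun x : ℝ => Real.exp (-x) * x ^ ((μ + 1) - 1)) 0 hs).mpr (by simpa using h0)
    simpa using this
  have h2 := h1.const_mul ((s : ℝ) ^ μ)⁻¹
  refine IntegrableOn.congr_fun h2 (fun x hx => ?_) measurableSet_Ioi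
  rw [mem_Ioi] at hx
  rw [add_sub_cancel_right, Real.mul_rpow hs.le hx.le]
  field_simp [(Real.rpow_pos_of_pos hs μ).ne']

lemma complex_int (μ : ℝ) (hμ : -1 < μ) {b : ℂ} (hb : 0 < b.re) :
    IntegrableOn (fun x : ℝ => ((x ^ μ : ℝ) : ℂ) * Complex.exp (-b * x)) (Ioi 0) := by
  have hmeas : AEStronglyMeasurable
      (fun x : ℝ => ((x ^ μ : ℝ) : ℂ) * Complex.exp (-b * x))
      (volume.restrict (Ioi 0)) := by
    apply ContinuousOn.aestronglyMeasurable _ measurableSet_Ioi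
    apply ContinuousOn.mul
    · exact Complex.continuous_ofReal.comp_continuousOn
        (fun x hx => (Real.continuousAt_rpow_const x μ (Or.inl (ne_of_gt hx))).continuousWithinAt)
    · exact (Complex.continuous_exp.comp (continuous_const.mul Complex.continuous_ofReal)).continuousOn
  refine Integrable.mono' (real_int μ hμ hb) hmeas ?_
  filter_upwards [ae_restrict_mem measurableSet_Ioi] with x hx
  rw [mem_Ioi] at hx
  rw [norm_mul, Complex.norm_real, Real.norm_eq_abs,
    abs_of_nonneg (Real.rpow_nonneg hx.le μ), Complex.norm_exp]
  gcongr
  simp [mul_comm]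


open Complex in
lemma meas_aux (μ : ℝ) (g : ℝ → ℂ) (hg : Continuous g) :
    AEStronglyMeasurable (fun x : ℝ => ((x ^ μ : ℝ) : ℂ) * g x)
      (volume.restrict (Ioi 0)) := by
  apply ContinuousOn.aestronglyMeasurable _ measurableSet_Ioi
  exact (Complex.continuous_ofReal.comp_continuousOn
    (fun x hx => (Real.continuousAt_rpow_const x μ (Or.inl (ne_of_gt hx))).continuousWithinAt)).mul
    hg.continuousOn

open Complex in
lemma F_diff (μ : ℝ) (hμ : -1 < μ) {b₀ : ℂ} (hb₀ : 0 < b₀.re) :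
    DifferentiableAt ℂ
      (fun b : ℂ => ∫ x : ℝ in Ioi 0, ((x ^ μ : ℝ) : ℂ) * Complex.exp (-b * x)) b₀ := by
  set ε : ℝ := b₀.re / 2 with hε
  have hεpos : 0 < ε := by positivity
  have key := hasDerivAt_integral_of_dominated_loc_of_deriv_le (μ := volume.restrict (Ioi 0))
    (F := fun (b : ℂ) (x : ℝ) => ((x ^ μ : ℝ) : ℂ) * Complex.exp (-b * x))
    (F' := fun (b : ℂ) (x : ℝ) => ((x ^ μ : ℝ) : ℂ) * (Complex.exp (-b * x) * (-(x : ℂ))))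
    (bound := fun x : ℝ => x ^ (μ + 1) * Real.exp (-(ε * x)))
    (x₀ := b₀) (Metric.ball_mem_nhds b₀ hεpos) ?_ ?_ ?_ ?_ ?_ ?_
  · exact key.2.differentiableAt
  · filter_upwards with b
    exact meas_aux μ _ (Complex.continuous_exp.comp (continuous_const.mul continuous_ofReal))
  · exact complex_int μ hμ hb₀
  · exact meas_aux μ _ ((Complex.continuous_exp.comp
      (continuous_const.mul continuous_ofReal)).mul continuous_ofReal.neg)
  · filter_upwards [ae_restrict_mem measurableSet_Ioi] with x hx b hb
    rw [mem_Ioi] at hx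
    have hbre : ε ≤ b.re := by
      have h1 : |(b - b₀).re| ≤ ‖b - b₀‖ := Complex.abs_re_le_norm _
      rw [Metric.mem_ball, Complex.dist_eq] at hb
      have := abs_le.mp (h1.trans hb.le) |>.1
      simp only [Complex.sub_re] at this
      simp only [hε]; linarith
    rw [norm_mul, norm_mul, Complex.norm_real, Real.norm_eq_abs,
      _root_.abs_of_nonneg (Real.rpow_nonneg hx.le μ), Complex.norm_exp,
      norm_neg, Complex.norm_real, Real.norm_eq_abs, _root_.abs_of_nonneg hx.le,
      Real.rpow_add_one hx.ne', mul_comm (Real.exp _) x, ← mul_assoc]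
    gcongr
    simp only [Complex.neg_re, Complex.mul_re, Complex.ofReal_re, Complex.ofReal_im,
      mul_zero, sub_zero]
    nlinarith
  · exact real_int (μ + 1) (by linarith) hεpos
  · filter_upwards [ae_restrict_mem measurableSet_Ioi] with x hx b hb
    have h1 : HasDerivAt (fun b : ℂ => -b * (x : ℂ)) (-(x : ℂ)) b := by
      simpa using ((hasDerivAt_id b).neg.mul_const (x : ℂ))
    exact (h1.cexp).const_mul _


open Complex in
lemma real_case (μ : ℝ) (hμ : -1 < μ) {r : ℝ} (hr : 0 < r) :
    ∫ x : ℝ in Ioi 0, ((x ^ μ : ℝ) : ℂ) * Complex.exp (-(r : ℂ) * x)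
      = Complex.Gamma ((μ : ℂ) + 1) / (r : ℂ) ^ ((μ : ℂ) + 1) := by
  have ha : 0 < ((μ : ℂ) + 1).re := by
    simp only [Complex.add_re, Complex.ofReal_re, Complex.one_re]
    linarith
  have h := Complex.integral_cpow_mul_exp_neg_mul_Ioi ha hr
  have h2 : ∫ x : ℝ in Ioi 0, ((x ^ μ : ℝ) : ℂ) * Complex.exp (-(r : ℂ) * x)
      = ∫ t : ℝ in Ioi 0, (t : ℂ) ^ ((μ : ℂ) + 1 - 1) * Complex.exp (-((r : ℝ) * t)) := by
    refine setIntegral_congr_fun measurableSet_Ioi (fun x hx => ?_)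
    rw [mem_Ioi] at hx
    rw [add_sub_cancel_right, ← Complex.ofReal_cpow hx.le]
    push_cast
    ring_nf
  rw [h2, h]
  rw [one_div, Complex.inv_cpow _ _ (by rw [Complex.arg_ofReal_of_nonneg hr.le]; positivity),
    inv_mul_eq_div]

open Complex in
lemma key_val (μ : ℝ) (hμ : -1 < μ) {b : ℂ} (hb : 0 < b.re) :
    ∫ x : ℝ in Ioi 0, ((x ^ μ : ℝ) : ℂ) * Complex.exp (-b * x)
      = Complex.Gamma ((μ : ℂ) + 1) / b ^ ((μ : ℂ) + 1) := by
  set U : Set ℂ := {z : ℂ | 0 < z.re} with hU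
  have hUopen : IsOpen U := isOpen_lt continuous_const Complex.continuous_re
  set F : ℂ → ℂ := fun b : ℂ => ∫ x : ℝ in Ioi 0, ((x ^ μ : ℝ) : ℂ) * Complex.exp (-b * x)
  set G : ℂ → ℂ := fun b : ℂ => Complex.Gamma ((μ : ℂ) + 1) / b ^ ((μ : ℂ) + 1)
  have hFdiff : DifferentiableOn ℂ F U := fun z hz =>
    (F_diff μ hμ (show 0 < z.re from hz)).differentiableWithinAt
  have hFan : AnalyticOnNhd ℂ F U := hFdiff.analyticOnNhd hUopen
  have hGan : AnalyticOnNhd ℂ G U := by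
    refine DifferentiableOn.analyticOnNhd (fun z hz => ?_) hUopen
    have hz' : (0:ℝ) < z.re := hz
    have hzslit : z ∈ Complex.slitPlane := Or.inl hz'
    have hzne : z ≠ 0 := Complex.slitPlane_ne_zero hzslit
    refine ((differentiableAt_const _).div
      (differentiableAt_id.cpow (differentiableAt_const _) hzslit) ?_).differentiableWithinAt
    simp [Complex.cpow_eq_zero_iff, hzne]
  have hconn : IsPreconnected U := (convex_halfSpace_re_gt 0).isPreconnected
  have h1U : (1 : ℂ) ∈ U := by simp [hU]
  have hfreq : ∃ᶠ z in nhdsWithin 1 {(1:ℂ)}ᶜ, F z = G z := by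
    have htend : Tendsto (fun n : ℕ => ((1 + 1/((n:ℝ)+1) : ℝ) : ℂ)) atTop
        (nhdsWithin 1 {(1:ℂ)}ᶜ) := by
      apply tendsto_nhdsWithin_of_tendsto_nhds_of_eventually_within
      · have : Tendsto (fun n : ℕ => (1 + 1/((n:ℝ)+1) : ℝ)) atTop (nhds 1) := by
          simpa using (tendsto_const_nhds (x := (1:ℝ))).add tendsto_one_div_add_atTop_nhds_zero_nat
        have h2 := (Complex.continuous_ofReal.tendsto 1).comp this
        simp only [Function.comp_def, Complex.ofReal_one] at h2
        exact h2
      · filter_upwards with n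
        simp only [mem_compl_iff, mem_singleton_iff]
        intro h
        have : (1 + 1/((n:ℝ)+1) : ℝ) = 1 := by exact_mod_cast h
        have hpos : (0:ℝ) < 1/((n:ℝ)+1) := by positivity
        linarith
    refine htend.frequently (Frequently.of_forall fun n => ?_)
    exact real_case μ hμ (by positivity)
  have := hFan.eqOn_of_preconnected_of_frequently_eq hGan hconn h1U hfreq
  exact this hb


open Complex in
lemma value_eq (μ ω : ℝ) (hω : 0 < ω) :
    Complex.Gamma ((μ : ℂ) + 1) / (-(Complex.I * (ω : ℂ))) ^ ((μ : ℂ) + 1)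
      = ((Real.Gamma (μ + 1) : ℝ) : ℂ) *
          Complex.exp (Complex.I * ((μ : ℂ) + 1) * (Real.pi : ℂ) / 2) / ((ω ^ (μ + 1) : ℝ) : ℂ) := by
  have hc : (μ : ℂ) + 1 = ((μ + 1 : ℝ) : ℂ) := by push_cast; ring
  set c : ℂ := (μ : ℂ) + 1 with hcdef
  have hωne : ((ω : ℂ)) ≠ 0 := by exact_mod_cast hω.ne'
  have hne0 : -(Complex.I * (ω : ℂ)) ≠ 0 := by
    simp [Complex.I_ne_zero, hωne]
  have hexp : Complex.exp (((Real.log ω : ℝ) : ℂ) - (Real.pi : ℂ) / 2 * Complex.I)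
      = -(Complex.I * (ω : ℂ)) := by
    rw [sub_eq_add_neg, Complex.exp_add, ← Complex.ofReal_exp, Real.exp_log hω]
    have hmI : Complex.exp (-((Real.pi : ℂ) / 2 * Complex.I)) = -Complex.I := by
      rw [show -((Real.pi : ℂ) / 2 * Complex.I) = (-((Real.pi : ℂ) / 2)) * Complex.I by ring,
        Complex.exp_mul_I, Complex.cos_neg, Complex.sin_neg]
      norm_cast
      rw [Real.cos_pi_div_two, Real.sin_pi_div_two]
      simp
    rw [hmI]
    ring
  have hlog : Complex.log (-(Complex.I * (ω : ℂ)))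
      = ((Real.log ω : ℝ) : ℂ) - (Real.pi : ℂ) / 2 * Complex.I := by
    rw [← hexp, Complex.log_exp]
    · simp
      linarith [Real.pi_pos]
    · simp
      linarith [Real.pi_pos]
  have hden : (-(Complex.I * (ω : ℂ))) ^ c
      = Complex.exp (c * (((Real.log ω : ℝ) : ℂ) - (Real.pi : ℂ) / 2 * Complex.I)) := by
    rw [Complex.cpow_def_of_ne_zero hne0, hlog, mul_comm]
  have hpow : ((ω ^ (μ + 1) : ℝ) : ℂ) = Complex.exp (c * ((Real.log ω : ℝ) : ℂ)) := by
    rw [Complex.ofReal_cpow hω.le, ← hc, Complex.cpow_def_of_ne_zero hωne,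
      ← Complex.ofReal_log hω.le, mul_comm]
  rw [hden, hpow, hc, Complex.Gamma_ofReal, ← hc]
  rw [div_eq_div_iff (Complex.exp_ne_zero _) (Complex.exp_ne_zero _), mul_assoc,
    ← Complex.exp_add]
  congr 1
  ring

open Complex in
theorem abel_limit_pf (μ ω : ℝ) (hμ : -1 < μ) (hω : 0 < ω) :
    (∀ s : ℝ, 0 < s →
      IntegrableOn (fun x : ℝ => Complex.exp (-(s : ℂ) * (x : ℂ)) *
        (((x ^ μ : ℝ) : ℂ) * Complex.exp (Complex.I * (ω : ℂ) * (x : ℂ)))) (Ioi 0)) ∧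
    Tendsto (fun s : ℝ => ∫ x in Ioi (0:ℝ), Complex.exp (-(s : ℂ) * (x : ℂ)) *
        (((x ^ μ : ℝ) : ℂ) * Complex.exp (Complex.I * (ω : ℂ) * (x : ℂ))))
      (nhdsWithin 0 (Ioi 0))
      (nhds (((Real.Gamma (μ + 1) : ℝ) : ℂ) *
        Complex.exp (Complex.I * ((μ : ℂ) + 1) * (Real.pi : ℂ) / 2) / ((ω ^ (μ + 1) : ℝ) : ℂ))) := by
  set c : ℂ := (μ : ℂ) + 1
  have hre : ∀ s : ℝ, 0 < s → 0 < ((s : ℂ) - Complex.I * (ω : ℂ)).re := by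
    intro s hs
    simpa using hs
  have hfun : ∀ s x : ℝ,
      Complex.exp (-(s : ℂ) * (x : ℂ)) *
        (((x ^ μ : ℝ) : ℂ) * Complex.exp (Complex.I * (ω : ℂ) * (x : ℂ)))
      = ((x ^ μ : ℝ) : ℂ) * Complex.exp (-((s : ℂ) - Complex.I * (ω : ℂ)) * (x : ℂ)) := by
    intro s x
    rw [show -((s : ℂ) - Complex.I * (ω : ℂ)) * (x : ℂ)
        = -(s : ℂ) * (x : ℂ) + Complex.I * (ω : ℂ) * (x : ℂ) by ring, Complex.exp_add]
    ring
  constructor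
  · intro s hs
    exact IntegrableOn.congr_fun (complex_int μ hμ (hre s hs))
      (fun x _ => (hfun s x).symm) measurableSet_Ioi
  · have hval : ∀ s ∈ Ioi (0:ℝ),
        Complex.Gamma c / ((s : ℂ) - Complex.I * (ω : ℂ)) ^ c
        = ∫ x in Ioi (0:ℝ), Complex.exp (-(s : ℂ) * (x : ℂ)) *
            (((x ^ μ : ℝ) : ℂ) * Complex.exp (Complex.I * (ω : ℂ) * (x : ℂ))) := by
      intro s hs
      rw [setIntegral_congr_fun measurableSet_Ioi (fun x _ => hfun s x)]
      exact (key_val μ hμ (hre s hs)).symm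
    refine Tendsto.congr' (eventually_nhdsWithin_of_forall hval) ?_
    have hslit : -(Complex.I * (ω : ℂ)) ∈ Complex.slitPlane := by
      refine Or.inr ?_
      simp [hω.ne']
    have h1 : Tendsto (fun s : ℝ => (s : ℂ) - Complex.I * (ω : ℂ)) (nhdsWithin 0 (Ioi 0))
        (nhds (-(Complex.I * (ω : ℂ)))) := by
      have hbase : Tendsto (fun s : ℝ => ((s : ℂ) - Complex.I * (ω : ℂ))) (nhds 0)
          (nhds (((0:ℝ) : ℂ) - Complex.I * (ω : ℂ))) :=
        (Complex.continuous_ofReal.tendsto 0).sub tendsto_const_nhds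
      have := hbase.mono_left (nhdsWithin_le_nhds (s := Ioi (0:ℝ)))
      simpa using this
    have h2 : Tendsto (fun s : ℝ => ((s : ℂ) - Complex.I * (ω : ℂ)) ^ c)
        (nhdsWithin 0 (Ioi 0)) (nhds ((-(Complex.I * (ω : ℂ))) ^ c)) :=
      (continuousAt_cpow_const hslit).tendsto.comp h1
    have hne : (-(Complex.I * (ω : ℂ))) ^ c ≠ 0 := by
      rw [Ne, Complex.cpow_eq_zero_iff]
      push_neg
      intro h
      exact absurd h (by simp [Complex.I_ne_zero, show ((ω:ℂ)) ≠ 0 from by exact_mod_cast hω.ne'])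
    have h3 := (tendsto_const_nhds (x := Complex.Gamma c)).div h2 hne
    rw [show Complex.Gamma c / (-(Complex.I * (ω : ℂ))) ^ c
        = ((Real.Gamma (μ + 1) : ℝ) : ℂ) *
          Complex.exp (Complex.I * ((μ : ℂ) + 1) * (Real.pi : ℂ) / 2) / ((ω ^ (μ + 1) : ℝ) : ℂ)
      from value_eq μ ω hω] at h3
    exact h3

end AbelAux0

open AbelAux0 in
/-- Abel limit of `∫₀^∞ x^μ e^{iωx} dx`. -/
theorem abel_limit_power_fourier (μ ω : ℝ) (hμ : -1 < μ) (hω : 0 < ω) :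
    HasAbelLimit (fun x : ℝ => ((x ^ μ : ℝ) : ℂ) * Complex.exp (Complex.I * (ω : ℂ) * (x : ℂ)))
      ((Real.Gamma (μ + 1) : ℂ) * Complex.exp (Complex.I * ((μ : ℂ) + 1) * (Real.pi : ℂ) / 2)
        / ((ω ^ (μ + 1) : ℝ) : ℂ)) := by
  exact abel_limit_pf μ ω hμ hω

end
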